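/- If ψ₁(x) = p₁(x) exp(i k x) with p₁ periodic of period ℓ, p₁ continuous not identically zero, and 0 < kℓ < π, then the ratio (∫₀^{mℓ} ψ₁² dx) / (∫₀^{mℓ} |ψ₁|² dx) tends to 0 as m → ∞. -/

import Mathlib

open scoped Real
open Filter

/-- For ψ₁(x) = p₁(x) exp(ikx) with p₁ continuous, ℓ-periodic, not
identically zero, and 0 < kℓ < π, the ratio (∫₀^{mℓ} ψ₁²)/(∫₀^{mℓ} |ψ₁|²) → 0. -/
theorem floquet_condition_A (ℓ k : ℝ) (p₁ : ℝ → ℂ)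
    (hℓ : 0 < ℓ) (hk0 : 0 < k * ℓ) (hkπ : k * ℓ < Real.pi)
    (hp_cont : Continuous p₁)
    (hp_per : ∀ x, p₁ (x + ℓ) = p₁ x)
    (hp_ne : ∃ x, p₁ x ≠ 0)
    (ψ₁ : ℝ → ℂ)
    (hψ : ∀ x, ψ₁ x = p₁ x * Complex.exp (Complex.I * k * x)) :
    Tendsto (fun m : ℕ =>
        ‖∫ x in (0:ℝ)..(m * ℓ), (ψ₁ x) ^ 2‖ /
          ∫ x in (0:ℝ)..(m * ℓ), ‖ψ₁ x‖ ^ 2)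
      atTop (nhds 0) := by
  have hψc : Continuous ψ₁ := by
    have : ψ₁ = fun x => p₁ x * Complex.exp (Complex.I * k * x) := funext hψ
    rw [this]
    continuity
  set f : ℝ → ℂ := fun x => (ψ₁ x) ^ 2 with hf
  have hfc : Continuous f := hψc.pow 2
  set c : ℂ := Complex.exp (Complex.I * k * ℓ) ^ 2 with hcdef
  -- shift property
  have hshift1 : ∀ x, f (x + ℓ) = c * f x := by
    intro x
    simp only [hf, hψ, hp_per]
    rw [hcdef]
    rw [show Complex.I * k * (↑(x + ℓ)) = Complex.I * k * x + Complex.I * k * ℓ by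
      push_cast; ring, Complex.exp_add]
    ring
  have hshift : ∀ (j : ℕ) (x : ℝ), f (x + j * ℓ) = c ^ j * f x := by
    intro j
    induction j with
    | zero => simp
    | succ n ih =>
      intro x
      have : x + (n + 1 : ℕ) * ℓ = (x + n * ℓ) + ℓ := by push_cast; ring
      rw [this, hshift1, ih]
      ring
  have habsc : ‖c‖ = 1 := by
    rw [hcdef, norm_pow, Complex.norm_exp]
    simp [Complex.mul_re]
  have hc1 : c ≠ 1 := by
    intro h
    rw [hcdef, ← Complex.exp_nat_mul] at h
    rw [Complex.exp_eq_one_iff] at h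
    obtain ⟨n, hn⟩ := h
    have h' : Complex.I * ((2 * (k * ℓ) : ℝ) : ℂ) = Complex.I * ((n * (2 * Real.pi) : ℝ) : ℂ) := by
      push_cast
      push_cast at hn
      linear_combination hn
    have h2 : (2 : ℝ) * (k * ℓ) = (n : ℝ) * (2 * Real.pi) := by
      have := mul_left_cancel₀ Complex.I_ne_zero h'
      exact_mod_cast this
    have hπ : 0 < Real.pi := Real.pi_pos
    rcases (by omega : n ≤ -1 ∨ n = 0 ∨ 1 ≤ n) with h | h | h
    · have : (n : ℝ) ≤ -1 := by exact_mod_cast h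
      nlinarith
    · rw [h] at h2; push_cast at h2; nlinarith
    · have : (1 : ℝ) ≤ (n : ℝ) := by exact_mod_cast h
      nlinarith
  set A : ℂ := ∫ x in (0:ℝ)..ℓ, f x with hA
  -- numerator identity
  have hnum : ∀ m : ℕ, (∫ x in (0:ℝ)..(m * ℓ), f x) = (∑ j ∈ Finset.range m, c ^ j) * A := by
    intro m
    have hadj := intervalIntegral.sum_integral_adjacent_intervals
      (a := fun j : ℕ => (j : ℝ) * ℓ) (n := m) (μ := MeasureTheory.volume) (f := f)
      (fun j _ => hfc.intervalIntegrable _ _)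
    simp only [Nat.cast_zero, zero_mul] at hadj
    rw [← hadj, Finset.sum_mul]
    refine Finset.sum_congr rfl fun j _ => ?_
    have : (∫ x in ((j:ℝ) * ℓ)..(((j:ℕ)+1 : ℕ) : ℝ) * ℓ, f x)
        = ∫ x in (0:ℝ)..ℓ, f (x + j * ℓ) := by
      rw [intervalIntegral.integral_comp_add_right f ((j:ℝ) * ℓ)]
      push_cast
      ring_nf
    rw [this]
    simp_rw [hshift j]
    rw [intervalIntegral.integral_const_mul]
  -- bound the numerator
  set C : ℝ := 2 / ‖c - 1‖ * ‖A‖ with hC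
  have hCnn : 0 ≤ C := by positivity
  have hnum_bound : ∀ m : ℕ, ‖∫ x in (0:ℝ)..(m * ℓ), f x‖ ≤ C := by
    intro m
    rw [hnum, norm_mul]
    apply mul_le_mul_of_nonneg_right ?_ (norm_nonneg _)
    rw [geom_sum_eq hc1, norm_div]
    have h1 : ‖c ^ m - 1‖ ≤ 2 := by
      calc ‖c ^ m - 1‖ ≤ ‖c ^ m‖ + ‖(1:ℂ)‖ :=
            (norm_sub_le _ _)
        _ = 2 := by rw [norm_pow, habsc]; norm_num
    have h2 : 0 < ‖c - 1‖ := by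
      rw [norm_pos_iff]
      exact sub_ne_zero.mpr hc1
    rw [div_le_div_iff₀ h2 h2]
    nlinarith
  -- denominator
  set g : ℝ → ℝ := fun x => ‖p₁ x‖ ^ 2 with hg
  have hgc : Continuous g := (continuous_norm.comp hp_cont).pow 2
  have hgψ : ∀ x, ‖ψ₁ x‖ ^ 2 = g x := by
    intro x
    rw [hψ, norm_mul, Complex.norm_exp]
    simp [Complex.mul_re, hg]
  have hg_per : Function.Periodic g ℓ := fun x => by simp [hg, hp_per]
  set B : ℝ := ∫ x in (0:ℝ)..ℓ, g x with hB
  have hden : ∀ m : ℕ, (∫ x in (0:ℝ)..(m * ℓ), g x) = m * B := by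
    intro m
    have h0 := hg_per.intervalIntegral_add_zsmul_eq (m : ℤ) 0
      (fun t₁ t₂ => hgc.intervalIntegrable t₁ t₂)
    have e1 : (0:ℝ) + (m:ℤ) • ℓ = (m:ℝ) * ℓ := by
      rw [zsmul_eq_mul]; push_cast; ring
    have e2 : (0:ℝ) + ℓ = ℓ := by ring
    rw [e1, e2, zsmul_eq_mul] at h0
    rw [h0, hB]
    push_cast
    ring
  -- B > 0
  have hBpos : 0 < B := by
    obtain ⟨x₀, hx₀⟩ := hp_ne
    set y : ℝ := x₀ - ⌊x₀ / ℓ⌋ * ℓ with hy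
    have hy0 : 0 ≤ y := Int.sub_floor_div_mul_nonneg x₀ hℓ
    have hyl : y < ℓ := Int.sub_floor_div_mul_lt x₀ hℓ
    have hp_per' : Function.Periodic p₁ ℓ := hp_per
    have hpy : p₁ y ≠ 0 := by
      rw [hy, hp_per'.sub_int_mul_eq]; exact hx₀
    have hgy : 0 < g y := pow_pos (norm_pos_iff.mpr hpy) 2
    -- find a neighbourhood where g is positive
    have hopen : IsOpen (g ⁻¹' Set.Ioi 0) := isOpen_Ioi.preimage hgc
    obtain ⟨ε, hε, hball⟩ := Metric.isOpen_iff.mp hopen y hgy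
    rw [hB, intervalIntegral.integral_pos_iff_support_of_nonneg_ae
      (Filter.Eventually.of_forall fun x => by positivity)
      (hgc.intervalIntegrable 0 ℓ)]
    refine ⟨hℓ, ?_⟩
    have hsub : Set.Ioo y (min (y + ε) ℓ) ⊆ Function.support g ∩ Set.Ioc 0 ℓ := by
      intro z hz
      obtain ⟨hz1, hz2⟩ := hz
      have hz3 : z < y + ε := lt_of_lt_of_le hz2 (min_le_left _ _)
      have hz4 : z ≤ ℓ := le_of_lt (lt_of_lt_of_le hz2 (min_le_right _ _))
      constructor
      · have : z ∈ g ⁻¹' Set.Ioi 0 := hball (by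
          rw [Real.ball_eq_Ioo]
          exact ⟨by linarith, hz3⟩)
        exact ne_of_gt this
      · exact ⟨lt_of_le_of_lt hy0 hz1, hz4⟩
    have hlt : y < min (y + ε) ℓ := lt_min (by linarith) hyl
    refine lt_of_lt_of_le ?_ (MeasureTheory.measure_mono hsub)
    rw [Real.volume_Ioo]
    simp only [ENNReal.ofReal_pos]
    linarith
  -- conclusion
  have hub : Tendsto (fun m : ℕ => (C / B) / (m : ℝ)) atTop (nhds 0) :=
    tendsto_const_div_atTop_nhds_zero_nat (C / B)
  refine squeeze_zero (fun m => ?_) (fun m => ?_) hub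
  · apply div_nonneg (by positivity)
    simp_rw [hgψ]
    rw [hden]
    positivity
  · simp_rw [hgψ]
    rw [hden]
    rcases Nat.eq_zero_or_pos m with h | h
    · subst h
      simp
    · have hm : (0:ℝ) < m := by exact_mod_cast h
      rw [div_div, div_le_div_iff₀ (by positivity) (by positivity)]
      calc ‖∫ x in (0:ℝ)..(m * ℓ), (ψ₁ x) ^ 2‖ * (B * m)
          ≤ C * (B * m) := by
            have := hnum_bound m
            gcongr
        _ = C * (m * B) := by ring
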